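/- If H is a homogeneous relation on X and A, B are overlapping homogeneous modules, then any element s ∉ A∪B with no splitting inside A and no splitting inside B also does not split A∪B; that is, the set of splitters of A∪B that are not splitters of A is contained in the set of splitters of B that are not splitters of A∩B. -/
import Mathlib


/-- `H` is a homogeneous relation: for each `x`, the binary relation
`H x · ·` is an equivalence relation on the elements distinct from `x`. -/
def IsHomRel {X : Type*} (H : X → X → X → Prop) : Prop :=
  (∀ x y, y ≠ x → H x y y) ∧
  (∀ x y z, y ≠ x → z ≠ x → H x y z → H x z y) ∧
  (∀ x y z w, y ≠ x → z ≠ x → w ≠ x → H x y z → H x z w → H x y w)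

/-- `M` is a homogeneous module of `H`. -/
def IsModule {X : Type*} (H : X → X → X → Prop) (M : Set X) : Prop :=
  ∀ m ∈ M, ∀ m' ∈ M, ∀ x ∉ M, H x m m'

/-- Two sets overlap. -/
def Overlap {X : Type*} (A B : Set X) : Prop :=
  (A ∩ B).Nonempty ∧ (A \ B).Nonempty ∧ (B \ A).Nonempty

/-- The set of splitters of `A`. -/
def splitters {X : Type*} (H : X → X → X → Prop) (A : Set X) : Set X :=
  {x | x ∉ A ∧ ∃ a ∈ A, ∃ a' ∈ A, ¬ H x a a'}

theorem stmt_6 {X : Type*} [Fintype X] (H : X → X → X → Prop)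
    (hH : IsHomRel H) (A B : Set X) (hA : IsModule H A) (hB : IsModule H B)
    (hover : Overlap A B) :
    splitters H (A ∪ B) \ splitters H A ⊆
      splitters H B \ splitters H (A ∩ B) := by
  rintro s ⟨⟨hsAB, a, ha, a', ha', hne⟩, hsA⟩
  have hsA' : s ∉ A := fun h => hsAB (Or.inl h)
  have hsB' : s ∉ B := fun h => hsAB (Or.inr h)
  have hAok : ∀ x ∈ A, ∀ y ∈ A, H s x y := by
    intro x hx y hy
    by_contra h
    exact hsA ⟨hsA', x, hx, y, hy, h⟩
  obtain ⟨c, hcA, hcB⟩ := hover.1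
  have hneS : ∀ x ∈ A ∪ B, x ≠ s := by
    rintro x hx rfl; exact hsAB hx
  refine ⟨⟨hsB', ?_⟩, fun ⟨_, x, hx, y, hy, h⟩ => h (hAok x hx.1 y hy.1)⟩
  by_contra hB'
  push_neg at hB'
  have hBok : ∀ x ∈ B, ∀ y ∈ B, H s x y := hB'
  apply hne
  rcases ha with ha | ha <;> rcases ha' with ha' | ha'
  · exact hAok a ha a' ha'
  · exact hH.2.2 s a c a' (hneS a (Or.inl ha)) (hneS c (Or.inl hcA))
      (hneS a' (Or.inr ha')) (hAok a ha c hcA) (hBok c hcB a' ha')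
  · exact hH.2.2 s a c a' (hneS a (Or.inr ha)) (hneS c (Or.inl hcA))
      (hneS a' (Or.inl ha')) (hBok a ha c hcB) (hAok c hcA a' ha')
  · exact hBok a ha a' ha'
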